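/- arXiv:2502.02112 — 2 statements merged into one kernel-verified Lean document; each statement's English description precedes it below -/
import Mathlib

section
/- Let Z = {z_1,…,z_n} with symmetric non-negative d_Z, and suppose the triplet merge tree TMT(Z) contains, for each j ∈ {2,…,n}, a triple (z_j, b_j, z_i) with i < j such that [z_j] dies at b_j and ρ_{0,b_j}([z_j]) = [z_i]. Then for every b > 0, ker(ρ_{0b}) is spanned over 𝔽₂ by the set { [z_j] + [z_i] : (z_j, b_j, z_i) ∈ TMT(Z) and b_j ≤ b }. -/
open scoped NNReal
open Module

/-- 1-skeleton of the Vietoris–Rips filtration of `(Z, d)`: edgeless at `r = 0`;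
for `r > 0` it has an edge between distinct points at distance at most `r`.
(The adjacency is symmetrized; for symmetric `d` this agrees with the usual definition.) -/
def VR {Z : Type*} (d : Z → Z → ℝ≥0) (r : ℝ≥0) : SimpleGraph Z where
  Adj z z' := z ≠ z' ∧ 0 < r ∧ d z z' ≤ r ∧ d z' z ≤ r
  symm := by constructor; intro z z' h; exact ⟨h.1.symm, h.2.1, h.2.2.2, h.2.2.1⟩
  loopless := by constructor; intro z h; exact h.1 rfl

/-- "Closed" Vietoris–Rips graph, used for `ker⁺`: at `r = 0` it has the edges between
distinct points at distance `0`; for `r > 0` it coincides with `VR d r`. -/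
def VRc {Z : Type*} (d : Z → Z → ℝ≥0) (r : ℝ≥0) : SimpleGraph Z where
  Adj z z' := z ≠ z' ∧ d z z' ≤ r ∧ d z' z ≤ r
  symm := by constructor; intro z z' h; exact ⟨h.1.symm, h.2.2, h.2.1⟩
  loopless := by constructor; intro z h; exact h.1 rfl

lemma VR_mono {Z : Type*} (d : Z → Z → ℝ≥0) {r s : ℝ≥0} (hrs : r ≤ s) :
    VR d r ≤ VR d s := by
  intro a b hab
  exact ⟨hab.1, hab.2.1.trans_le hrs, hab.2.2.1.trans hrs, hab.2.2.2.trans hrs⟩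

/-- The structure map `ρ` from `H₀` of the edgeless graph on `Z` (the free `𝔽₂`-vector
space on `Z`, identified with `Z → 𝔽₂`) to `H₀(G)` (the free `𝔽₂`-vector space on the
connected components of `G`), summing the coefficients over each connected component. -/
noncomputable def rho {Z : Type*} [Fintype Z] (G : SimpleGraph Z) :
    (Z → ZMod 2) →ₗ[ZMod 2] (G.ConnectedComponent → ZMod 2) where
  toFun v c :=
    ∑ z ∈ @Finset.filter _ (fun z => G.connectedComponentMk z = c)
      (Classical.decPred _) Finset.univ, v z
  map_add' := by
    intro v w; funext c; simp [Finset.sum_add_distrib]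
  map_smul' := by
    intro m v; funext c; simp [Finset.mul_sum]

/-- `ker (ρ_{0r})` for the (open) Vietoris–Rips graph `VR d r`. -/
noncomputable def kerVR {Z : Type*} [Fintype Z] (d : Z → Z → ℝ≥0) (r : ℝ≥0) :
    Submodule (ZMod 2) (Z → ZMod 2) := LinearMap.ker (rho (VR d r))

/-- `ker⁺_b`: kernel of `ρ_{0b}`.  For `b > 0` this is `ker (ρ_{0b})` of `VR d b`;
at `b = 0` it is the span of the classes `[z_j] + [z_i]` with `d z_i z_j = 0`. -/
noncomputable def kerP {Z : Type*} [Fintype Z] (d : Z → Z → ℝ≥0) (b : ℝ≥0) :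
    Submodule (ZMod 2) (Z → ZMod 2) := LinearMap.ker (rho (VRc d b))

/-- `ker⁻_b = ⋃_{0 ≤ r < b} ker (ρ_{0r})`, as a submodule (the union is increasing). -/
noncomputable def kerM {Z : Type*} [Fintype Z] (d : Z → Z → ℝ≥0) (b : ℝ≥0) :
    Submodule (ZMod 2) (Z → ZMod 2) := ⨆ r : {r : ℝ≥0 // r < b}, kerVR d (r : ℝ≥0)

/-- Multiplicity of the death value `a` in the barcode: `m(a) = dim ker⁺_a − dim ker⁻_a`. -/
noncomputable def mult {Z : Type*} [Fintype Z] (d : Z → Z → ℝ≥0) (a : ℝ≥0) : ℕ :=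
  finrank (ZMod 2) (kerP d a) - finrank (ZMod 2) (kerM d a)

/-- The induced block function `M_f(a,b)` for the identity relabelling bijection
`f : (Fin n, dX) → (Fin n, dZ)`, `x_i ↦ z_i` (so that `f₀ = id` on `H₀(VR₀)`):
`dim ((f₀ ker⁺_a(X) ∩ ker⁺_b(Z)) / (f₀ ker⁻_a(X) ∩ ker⁺_b(Z) + f₀ ker⁺_a(X) ∩ ker⁻_b(Z)))`. -/
noncomputable def blockFn {Z : Type*} [Fintype Z] (dX dZ : Z → Z → ℝ≥0) (a b : ℝ≥0) : ℕ :=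
  finrank (ZMod 2)
    ((↥(kerP dX a ⊓ kerP dZ b)) ⧸
      ((kerM dX a ⊓ kerP dZ b ⊔ kerP dX a ⊓ kerM dZ b).comap
        (kerP dX a ⊓ kerP dZ b).subtype))

/-- `[z_j]` dies at value `b`: for `b > 0`, the component of `z_j` contains no `z_i`
with `i < j` at all parameters `ℓ < b`, and merges with such a component at `b`;
for `b = 0`, `z_j` lies in the same connected component at parameter `0`
(with the distance-`0` edges) as some `z_i` with `i < j`. -/
def diesAt {n : ℕ} (d : Fin n → Fin n → ℝ≥0) (j : Fin n) (b : ℝ≥0) : Prop :=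
  (0 < b ∧ (∀ ℓ : ℝ≥0, ℓ < b → ∀ i : Fin n, i < j → ¬ (VR d ℓ).Reachable i j) ∧
    ∃ i : Fin n, i < j ∧ (VR d b).Reachable i j) ∨
  (b = 0 ∧ ∃ i : Fin n, i < j ∧ (VRc d 0).Reachable i j)

open Classical in
lemma rho_apply {Z : Type*} [Fintype Z] (G : SimpleGraph Z) (v : Z → ZMod 2)
    (c : G.ConnectedComponent) :
    rho G v c = ∑ z : Z, if G.connectedComponentMk z = c then v z else 0 := by
  simp only [rho, LinearMap.coe_mk, AddHom.coe_mk]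
  rw [Finset.sum_filter]

open Classical in
lemma rho_single {Z : Type*} [Fintype Z] [DecidableEq Z] (G : SimpleGraph Z) (z : Z)
    (c : G.ConnectedComponent) :
    rho G (Pi.single z 1) c = if G.connectedComponentMk z = c then 1 else 0 := by
  rw [rho_apply, Finset.sum_eq_single z]
  · simp
  · intro b _ hbz
    simp [Pi.single_apply, hbz]
  · simp

lemma mk_out {Z : Type*} (G : SimpleGraph Z) (c : G.ConnectedComponent) :
    G.connectedComponentMk c.out = c := Quot.out_eq c

open Classical in
lemma ker_identity {Z : Type*} [Fintype Z] [DecidableEq Z] (G : SimpleGraph Z) (v : Z → ZMod 2)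
    (hv : rho G v = 0) :
    v = ∑ z : Z, v z • (Pi.single z 1 + Pi.single (G.connectedComponentMk z).out 1) := by
  funext w
  simp only [Finset.sum_apply, Pi.smul_apply, Pi.add_apply, Pi.single_apply, smul_eq_mul,
    mul_add, mul_ite, mul_one, mul_zero]
  rw [Finset.sum_add_distrib, Finset.sum_ite_eq Finset.univ w v]
  have h2 : (∑ z : Z, if w = (G.connectedComponentMk z).out then v z else 0) = 0 := by
    by_cases hw : (G.connectedComponentMk w).out = w
    · have key : ∀ z : Z, (w = (G.connectedComponentMk z).out) ↔
          (G.connectedComponentMk z = G.connectedComponentMk w) := by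
        intro z
        constructor
        · intro h
          rw [h, mk_out]
        · intro h
          rw [h, hw]
      have : (∑ z : Z, if w = (G.connectedComponentMk z).out then v z else 0)
          = ∑ z : Z, if G.connectedComponentMk z = G.connectedComponentMk w then v z else 0 :=
        Finset.sum_congr rfl (fun z _ => by rw [if_congr (key z) rfl rfl])
      rw [this, ← rho_apply, hv]
      rfl
    · refine Finset.sum_eq_zero fun z _ => ?_
      rw [if_neg]
      intro h
      exact hw (by rw [h, mk_out, ← h])
  rw [h2, if_pos (Finset.mem_univ w), add_zero]

lemma VRc_mono {Z : Type*} (d : Z → Z → ℝ≥0) {r s : ℝ≥0} (hrs : r ≤ s) :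
    VRc d r ≤ VRc d s := fun _ _ h => ⟨h.1, h.2.1.trans hrs, h.2.2.trans hrs⟩

lemma VRc_le_VR {Z : Type*} (d : Z → Z → ℝ≥0) {b : ℝ≥0} (hb : 0 < b) :
    VRc d b ≤ VR d b := fun _ _ h => ⟨h.1, hb, h.2.1, h.2.2⟩

lemma pi_add_self {Z : Type*} (v : Z → ZMod 2) : v + v = 0 :=
  funext fun _ => CharTwo.add_self_eq_zero _

lemma pair_rearrange {Z : Type*} (a b c : Z → ZMod 2) :
    a + b = (c + a) + (b + c) := by
  funext i
  simp only [Pi.add_apply]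
  have h2c : c i + c i = 0 := CharTwo.add_self_eq_zero _
  linear_combination -h2c

lemma pair_rearrange' {Z : Type*} (a b c : Z → ZMod 2) :
    a + b = (a + c) + (c + b) := by
  funext i
  simp only [Pi.add_apply]
  have h2c : c i + c i = 0 := CharTwo.add_self_eq_zero _
  linear_combination -h2c

lemma claim {n : ℕ} (d : Fin n → Fin n → ℝ≥0) (t : Fin n → ℝ≥0) (p : Fin n → Fin n)
    (ht : ∀ j : Fin n, 0 < (j : ℕ) →
      p j < j ∧ diesAt d j (t j) ∧ (VRc d (t j)).Reachable (p j) j)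
    (b : ℝ≥0) (hb : 0 < b) :
    ∀ m : ℕ, ∀ x y : Fin n, x < y → (y : ℕ) < m → (VRc d b).Reachable x y →
      Pi.single x 1 + Pi.single y 1 ∈ Submodule.span (ZMod 2)
        {v : Fin n → ZMod 2 | ∃ j : Fin n, 0 < (j : ℕ) ∧ t j ≤ b ∧
          v = Pi.single j 1 + Pi.single (p j) 1} := by
  intro m
  induction m using Nat.strong_induction_on with
  | _ m IH =>
    intro x y hxy hym hreach
    have hy0 : 0 < (y : ℕ) := lt_of_le_of_lt (Nat.zero_le _) hxy
    obtain ⟨hpy, hdies, hry⟩ := ht y hy0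
    have htyb : t y ≤ b := by
      rcases hdies with ⟨hpos, hno, -⟩ | ⟨h0, -⟩
      · by_contra hlt
        push_neg at hlt
        exact hno b hlt x hxy (hreach.mono (VRc_le_VR d hb))
      · rw [h0]; exact zero_le
    have hgen : Pi.single y 1 + Pi.single (p y) 1 ∈ Submodule.span (ZMod 2)
        {v : Fin n → ZMod 2 | ∃ j : Fin n, 0 < (j : ℕ) ∧ t j ≤ b ∧
          v = Pi.single j 1 + Pi.single (p j) 1} :=
      Submodule.subset_span ⟨y, hy0, htyb, rfl⟩
    have hrpx : (VRc d b).Reachable (p y) x :=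
      (hry.mono (VRc_mono d htyb)).trans hreach.symm
    rcases lt_trichotomy (p y) x with h | h | h
    · rw [pair_rearrange (Pi.single x 1) (Pi.single y 1) (Pi.single (p y) 1)]
      exact Submodule.add_mem _ (IH (y : ℕ) hym (p y) x h hxy hrpx) hgen
    · rw [← h, add_comm]
      exact hgen
    · rw [pair_rearrange' (Pi.single x 1) (Pi.single y 1) (Pi.single (p y) 1)]
      refine Submodule.add_mem _ (IH (y : ℕ) hym x (p y) h hpy hrpx.symm) ?_
      rwa [add_comm] at hgen

/-- if a triplet merge tree is given by death values `t j` and merge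
targets `p j < j` (with `[z_j]` dying at `t j` and `ρ_{0, t j} [z_j] = [z_{p j}]`),
then for every `b > 0`, `ker ρ_{0b}` is spanned over `𝔽₂` by the classes
`[z_j] + [z_{p j}]` with `t j ≤ b`. -/
theorem stmt4 {n : ℕ} (d : Fin n → Fin n → ℝ≥0) (hsym : ∀ i j, d i j = d j i)
    (t : Fin n → ℝ≥0) (p : Fin n → Fin n)
    (ht : ∀ j : Fin n, 0 < (j : ℕ) →
      p j < j ∧ diesAt d j (t j) ∧ (VRc d (t j)).Reachable (p j) j)
    (b : ℝ≥0) (hb : 0 < b) :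
    kerP d b = Submodule.span (ZMod 2)
      {v : Fin n → ZMod 2 | ∃ j : Fin n, 0 < (j : ℕ) ∧ t j ≤ b ∧
        v = Pi.single j 1 + Pi.single (p j) 1} := by
  apply le_antisymm
  · intro v hv
    simp only [kerP, LinearMap.mem_ker] at hv
    rw [ker_identity (VRc d b) v hv]
    refine Submodule.sum_mem _ fun z _ => Submodule.smul_mem _ _ ?_
    set w := ((VRc d b).connectedComponentMk z).out with hw
    have hr : (VRc d b).Reachable z w :=
      (SimpleGraph.ConnectedComponent.exact (mk_out (VRc d b) ((VRc d b).connectedComponentMk z))).symm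
    rcases lt_trichotomy z w with h | h | h
    · exact claim d t p ht b hb n z w h w.isLt hr
    · rw [← h, pi_add_self]
      exact Submodule.zero_mem _
    · rw [add_comm]
      exact claim d t p ht b hb n w z h z.isLt hr.symm
  · rw [Submodule.span_le]
    rintro v ⟨j, hj0, htj, rfl⟩
    have hr : (VRc d b).Reachable (p j) j := ((ht j hj0).2.2).mono (VRc_mono d htj)
    simp only [SetLike.mem_coe, kerP, LinearMap.mem_ker]
    funext c
    rw [map_add, Pi.add_apply, Pi.zero_apply, rho_single, rho_single,
      SimpleGraph.ConnectedComponent.sound hr]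
    exact CharTwo.add_self_eq_zero _
end

section
/- Let X, Z be finite sets with symmetric non-negative functions, f : X → Z a bijection, and ε > 0 such that |d_X(x,y) − d_Z(f(x), f(y))| < ε for all x, y ∈ X. Then M_f(a,b) = 0 whenever |a − b| > ε, where M_f is the induced block function. -/
open scoped NNReal
open Module

lemma ker_rho_mono {Z : Type*} [Fintype Z] {G G' : SimpleGraph Z}
    (h : ∀ z z', G.Adj z z' → G'.Reachable z z') :
    LinearMap.ker (rho G) ≤ LinearMap.ker (rho G') := by
  classical
  have hreach : ∀ z z', G.Reachable z z' → G'.Reachable z z' := by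
    intro z z' hr
    obtain ⟨w⟩ := hr
    induction w with
    | nil => exact SimpleGraph.Reachable.refl _
    | cons ha _ ih => exact (h _ _ ha).trans ih
  have : Fintype G.ConnectedComponent :=
    Fintype.ofSurjective G.connectedComponentMk (Quot.exists_rep)
  intro v hv
  rw [LinearMap.mem_ker] at hv ⊢
  funext c
  have key : ∀ z z' : Z, G.Reachable z z' →
      G'.connectedComponentMk z = G'.connectedComponentMk z' := by
    intro z z' hzz'
    exact SimpleGraph.ConnectedComponent.eq.mpr (hreach _ _ hzz')
  set φ : G.ConnectedComponent → G'.ConnectedComponent :=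
    Quot.lift (fun z => G'.connectedComponentMk z) (fun z z' hzz' =>
      key z z' hzz') with hφ
  have hφmk : ∀ z : Z, φ (G.connectedComponentMk z) = G'.connectedComponentMk z :=
    fun z => rfl
  have hz : ∀ d : G.ConnectedComponent,
      (∑ z ∈ Finset.univ.filter (fun z => G.connectedComponentMk z = d), v z) = 0 := by
    intro d
    have h1 := congrFun hv d
    simp only [rho, LinearMap.coe_mk, AddHom.coe_mk, Pi.zero_apply,
      Finset.filter_congr_decidable] at h1
    simpa [Finset.filter_congr_decidable] using h1
  show (rho G' v) c = (0 : G'.ConnectedComponent → ZMod 2) c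
  simp only [rho, LinearMap.coe_mk, AddHom.coe_mk, Pi.zero_apply,
    Finset.filter_congr_decidable]
  have step1 : (∑ z ∈ Finset.univ.filter (fun z => G'.connectedComponentMk z = c), v z)
      = ∑ z ∈ Finset.univ.filter (fun z => (G.connectedComponentMk z) ∈
          Finset.univ.filter (fun d => φ d = c)), v z := by
    apply Finset.sum_congr _ (fun _ _ => rfl)
    ext z
    simp only [Finset.mem_filter, Finset.mem_univ, true_and]
    rw [← hφmk z]
  rw [step1, ← Finset.sum_fiberwise_eq_sum_filter Finset.univ
    (Finset.univ.filter (fun d => φ d = c)) (fun z => G.connectedComponentMk z) v]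
  exact Finset.sum_eq_zero (fun d _ => hz d)

lemma kerP_le_kerM {Z : Type*} [Fintype Z] (dX dZ : Z → Z → ℝ≥0) (a b ε : ℝ≥0)
    (hε : 0 < ε) (h : ∀ x y : Z, |(dX x y : ℝ) - (dZ x y : ℝ)| < ε)
    (hab : a + ε < b) : kerP dX a ≤ kerM dZ b := by
  have h1 : kerP dX a ≤ kerVR dZ (a + ε) := by
    apply ker_rho_mono
    intro z z' hadj
    apply SimpleGraph.Adj.reachable
    have hd : ∀ w w' : Z, dX w w' ≤ a → dZ w w' ≤ a + ε := by
      intro w w' hw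
      have := (abs_sub_lt_iff.mp (h w w')).2
      have : (dZ w w' : ℝ) < (dX w w' : ℝ) + ε := by linarith
      have h2 : (dZ w w' : ℝ) ≤ (a : ℝ) + (ε : ℝ) := by
        have : (dX w w' : ℝ) ≤ (a : ℝ) := by exact_mod_cast hw
        linarith
      exact_mod_cast h2
    exact ⟨hadj.1, by positivity, hd _ _ hadj.2.1, hd _ _ hadj.2.2⟩
  exact h1.trans (le_iSup (fun r : {r : ℝ≥0 // r < b} => kerVR dZ (r : ℝ≥0)) ⟨a + ε, hab⟩)

lemma blockFn_eq_zero_of_le {Z : Type*} [Fintype Z] (dX dZ : Z → Z → ℝ≥0) (a b : ℝ≥0)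
    (hle : kerP dX a ⊓ kerP dZ b ≤ kerM dX a ⊓ kerP dZ b ⊔ kerP dX a ⊓ kerM dZ b) :
    blockFn dX dZ a b = 0 := by
  unfold blockFn
  have : ((kerM dX a ⊓ kerP dZ b ⊔ kerP dX a ⊓ kerM dZ b).comap
      (kerP dX a ⊓ kerP dZ b).subtype) = ⊤ := by
    rw [Submodule.comap_subtype_eq_top]
    exact hle
  rw [this]
  have : Subsingleton ((↥(kerP dX a ⊓ kerP dZ b)) ⧸
      (⊤ : Submodule (ZMod 2) ↥(kerP dX a ⊓ kerP dZ b))) :=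
    Submodule.Quotient.subsingleton_iff.mpr rfl
  exact finrank_zero_of_subsingleton

/-- if the bijection `f` (here the relabelling `x_i ↦ z_i`) satisfies
`|d_X(x,y) − d_Z(f x, f y)| < ε` for all `x, y`, then `M_f(a,b) = 0` whenever
`|a − b| > ε`. -/
theorem stmt10 {n : ℕ} (dX dZ : Fin n → Fin n → ℝ≥0)
    (hsX : ∀ i j, dX i j = dX j i) (hsZ : ∀ i j, dZ i j = dZ j i)
    (ε : ℝ≥0) (hε : 0 < ε)
    (h : ∀ x y : Fin n, |(dX x y : ℝ) - (dZ x y : ℝ)| < ε)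
    (a b : ℝ≥0) (hab : (ε : ℝ) < |(a : ℝ) - (b : ℝ)|) :
    blockFn dX dZ a b = 0 := by
  rcases le_or_gt a b with hab' | hab'
  · have h1 : a + ε < b := by
      rw [abs_sub_comm, abs_of_nonneg (sub_nonneg.mpr (NNReal.coe_le_coe.mpr hab'))] at hab
      exact_mod_cast show (a : ℝ) + ε < b by linarith
    apply blockFn_eq_zero_of_le
    refine le_trans ?_ le_sup_right
    intro v hv
    exact ⟨hv.1, kerP_le_kerM dX dZ a b ε hε h h1 hv.1⟩
  · have h1 : b + ε < a := by
      rw [abs_of_nonneg (sub_nonneg.mpr (NNReal.coe_le_coe.mpr hab'.le))] at hab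
      exact_mod_cast show (b : ℝ) + ε < a by linarith
    apply blockFn_eq_zero_of_le
    refine le_trans ?_ le_sup_left
    intro v hv
    refine ⟨kerP_le_kerM dZ dX b a ε hε (fun x y => ?_) h1 hv.2, hv.2⟩
    rw [abs_sub_comm]; exact h x y
end
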